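/- Let X be a commutative monoid and μ : X → ℝ≥0 a submultiplicative function with μ(1) = 1 (a monoid seminorm). If there exists an integer k ≥ 2 such that μ(f^k) = μ(f)^k for all f ∈ X, then μ is power-multiplicative, i.e., μ(f^m) = μ(f)^m for all f ∈ X and all integers m ≥ 1. -/

import Mathlib

open scoped NNReal

/-- A monoid seminorm `μ` on a commutative monoid `X` (a submultiplicative function with
`μ(1) = 1`) is power-multiplicative as soon as there is a single integer `k ≥ 2` with
`μ(f^k) = μ(f)^k` for all `f`. -/
theorem powerMultiplicative_of_pow_eq {X : Type*} [CommMonoid X] (μ : X → ℝ≥0)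
    (hsub : ∀ f g : X, μ (f * g) ≤ μ f * μ g) (hone : μ 1 = 1)
    (k : ℕ) (hk : 2 ≤ k) (hpow : ∀ f : X, μ (f ^ k) = μ f ^ k) :
    ∀ (f : X) (m : ℕ), 1 ≤ m → μ (f ^ m) = μ f ^ m := by
  have hle : ∀ (f : X) (n : ℕ), μ (f ^ n) ≤ μ f ^ n := by
    intro f n
    induction n with
    | zero => simp [hone]
    | succ n ih =>
      calc μ (f ^ (n + 1)) = μ (f ^ n * f) := by rw [pow_succ]
        _ ≤ μ (f ^ n) * μ f := hsub _ _
        _ ≤ μ f ^ n * μ f := mul_le_mul_left ih _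
        _ = μ f ^ (n + 1) := (pow_succ _ _).symm
  have hKn : ∀ (f : X) (n : ℕ), μ (f ^ k ^ n) = μ f ^ k ^ n := by
    intro f n
    induction n with
    | zero => simp
    | succ n ih =>
      rw [pow_succ, pow_mul, hpow, ih, ← pow_mul, ← pow_succ]
  intro f m hm
  refine le_antisymm (hle f m) ?_
  rcases eq_or_ne (μ f) 0 with h0 | h0
  · simp [h0, zero_pow (by omega : m ≠ 0)]
  · set n := k ^ m with hn
    have hnm : m ≤ n := le_trans (Nat.lt_two_pow_self (n := m)).le (Nat.pow_le_pow_left hk m)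
    set q := n / m with hq
    set r := n % m with hr
    have hq1 : 1 ≤ q := (Nat.one_le_div_iff (by omega)).mpr hnm
    have hdecomp : m * q + r = n := Nat.div_add_mod n m
    have key : (μ f ^ m) ^ q * μ f ^ r ≤ μ (f ^ m) ^ q * μ f ^ r := by
      calc (μ f ^ m) ^ q * μ f ^ r = μ f ^ n := by
            rw [← pow_mul, ← pow_add, hdecomp]
        _ = μ (f ^ n) := (hKn f m).symm
        _ = μ ((f ^ m) ^ q * f ^ r) := by rw [← pow_mul, ← pow_add, hdecomp]
        _ ≤ μ ((f ^ m) ^ q) * μ (f ^ r) := hsub _ _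
        _ ≤ μ (f ^ m) ^ q * μ f ^ r := mul_le_mul' (hle _ q) (hle f r)
    have hrpos : 0 < μ f ^ r := pow_pos (pos_iff_ne_zero.mpr h0) r
    have key2 : (μ f ^ m) ^ q ≤ μ (f ^ m) ^ q :=
      le_of_mul_le_mul_right key hrpos
    exact le_of_pow_le_pow_left₀ (by omega) zero_le key2
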